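/- For every β ∈ ℤ and all D₁, D₂ ∈ 𝔡, the following identity among cocycles holds: c_Lie(D₁^{(β)}, D₂^{(β)}) = β·c_Lie(D₁^{(1)}, D₂^{(1)}) + (1−β)·c_Lie(D₁^{(0)}, D₂^{(0)}) + 6nβ(β−1)·vir₁(D₁, D₂), where for D = (A, h) ∈ 𝔡 the twist D^{(β)} is the endomorphism v ↦ A·v + h • v′ + β·h′ • v of V, and vir₁((A,h),(B,k)) = (1/12)·Res(h‴·k − k‴·h). (This is the identity c_{n,β} = β·c_{n,1} + (1−β)·c_{n,0} + 6nβ(β−1)·vir₁ among the cocycles of the central extensions of the Lie algebra of first-order scalar differential operators.) -/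

import Mathlib

noncomputable section

abbrev K : Type := LaurentSeries ℂ

abbrev V (n : ℕ) : Type := Fin n → K

/-- The formal derivative of a Laurent series. -/
def fd (f : K) : K :=
  ⟨fun k => ((k + 1 : ℤ) : ℂ) * f.coeff (k + 1), by
    apply Set.IsPWO.mono (f.isPWO_support.image_of_monotone
      (f := fun x => x - 1) (fun _ _ h => sub_le_sub_right h 1))
    intro k hk
    have : f.coeff (k + 1) ≠ 0 := by
      intro h
      simp [Function.mem_support, h] at hk
    exact ⟨k + 1, this, by ring⟩⟩

/-- Truncation of a Laurent series to its coefficients in negative degrees: the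
projection onto `K₋` along `K₊`. -/
def tneg (f : K) : K :=
  ⟨fun k => if k < 0 then f.coeff k else 0, by
    refine f.isPWO_support.mono (fun k hk => ?_)
    simp only [Function.mem_support] at hk ⊢
    by_cases h : k < 0
    · simpa [h] using hk
    · simp [h] at hk⟩

/-- Truncation of a Laurent series to its coefficients in non-negative degrees: the
projection onto `K₊` along `K₋`. -/
def tpos (f : K) : K :=
  ⟨fun k => if 0 ≤ k then f.coeff k else 0, by
    refine f.isPWO_support.mono (fun k hk => ?_)
    simp only [Function.mem_support] at hk ⊢
    by_cases h : (0:ℤ) ≤ k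
    · simpa [h] using hk
    · simp [h] at hk⟩

/-- Componentwise projection of `V` onto `V₋` along `V₊`. -/
def projM {n : ℕ} (v : V n) : V n := fun i => tneg (v i)

/-- Componentwise projection of `V` onto `V₊` along `V₋`. -/
def projP {n : ℕ} (v : V n) : V n := fun i => tpos (v i)

/-- The basis vector `z^m · e_i` of `V`. -/
def bas (n : ℕ) (m : ℤ) (i : Fin n) : V n :=
  fun j => if j = i then HahnSeries.single m 1 else 0

/-- `T₁^{+−} ∘ T₂^{−+} − T₂^{+−} ∘ T₁^{−+}` as a map `V₋ → V₋` (evaluated through the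
projections onto `V₋` and `V₊`). -/
def commPM {n : ℕ} (T₁ T₂ : V n → V n) (v : V n) : V n :=
  projM (T₁ (projP (T₂ (projM v)))) - projM (T₂ (projP (T₁ (projM v))))

/-- The trace cocycle `c_Lie(T₁, T₂) = Tr(T₁^{+−} T₂^{−+} − T₂^{+−} T₁^{−+})`, computed
as the (finitely supported) sum of the diagonal coefficients in the basis
`{z^m e_i : m < 0, i}` of `V₋`. -/
def cLie (n : ℕ) (T₁ T₂ : V n → V n) : ℂ :=
  ∑ᶠ (m : ℤ) (_ : m < 0) (i : Fin n), ((commPM T₁ T₂ (bas n m i)) i).coeff m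


open LaurentPolynomial

/-- The ring `R = ℂ[z, z⁻¹]` of Laurent polynomials. -/
abbrev Rl : Type := LaurentPolynomial ℂ

/-- The inclusion `R = ℂ[z, z⁻¹] ⊆ K`. -/
def toK (f : Rl) : K :=
  ⟨fun k => f.coeff k, by
    refine (f.coeff.support.finite_toSet.isPWO).mono (fun k hk => ?_)
    simpa [Finsupp.mem_support_iff] using hk⟩

/-- The residue of a Laurent series: the coefficient of `z⁻¹`. -/
def Res (f : K) : ℂ := f.coeff (-1)

/-- The `β`-twisted operator `D^{(β)} : v ↦ A·v + h • v′ + β·h′ • v` attached to a pair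
`D = (A, h) ∈ 𝔡` (`A` a matrix of Laurent polynomials, `h` a Laurent polynomial). -/
def Dop (n : ℕ) (β : ℤ) (D : Matrix (Fin n) (Fin n) Rl × Rl) : V n → V n :=
  fun v i => (∑ j, toK (D.1 i j) * v j) + toK D.2 * fd (v i) + β • (fd (toK D.2) * v i)

/-- The Virasoro cocycle `vir₁((A,h),(B,k)) = (1/12)·Res(h‴·k − k‴·h)`. -/
def vir1 {n : ℕ} (D₁ D₂ : Matrix (Fin n) (Fin n) Rl × Rl) : ℂ :=
  (1 / 12 : ℂ) * Res (fd (fd (fd (toK D₁.2))) * toK D₂.2 - fd (fd (fd (toK D₂.2))) * toK D₁.2)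


section Aux

open HahnSeries

lemma fd_coeff (f : K) (k : ℤ) : (fd f).coeff k = ((k+1:ℤ):ℂ) * f.coeff (k+1) := rfl

-- finite interaction

lemma finite_inter (u v : K) (c : ℤ) :
    {a : ℤ | u.coeff a ≠ 0 ∧ v.coeff (c - a) ≠ 0}.Finite := by
  apply Set.Finite.subset (Set.Finite.image Prod.fst
    (Finset.addAntidiagonal u.isPWO_support v.isPWO_support c).finite_toSet)
  rintro a ⟨h1, h2⟩
  exact ⟨(a, c - a), Finset.mem_addAntidiagonal.mpr ⟨h1, h2, by omega⟩, rfl⟩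

lemma mul_coeff_finsum (u v : K) (c : ℤ) :
    (u * v).coeff c = ∑ᶠ a : ℤ, u.coeff a * v.coeff (c - a) := by
  classical
  rw [HahnSeries.coeff_mul]
  set s := Finset.addAntidiagonal u.isPWO_support v.isPWO_support c with hs
  rw [finsum_eq_finset_sum_of_support_subset _ (s := s.image Prod.fst)]
  · rw [Finset.sum_image]
    · apply Finset.sum_congr rfl
      intro ij hij
      rw [Finset.mem_addAntidiagonal] at hij
      have : ij.2 = c - ij.1 := by omega
      rw [this]
    · intro x hx y hy hxy
      replace hx := Finset.mem_addAntidiagonal.mp (Finset.mem_coe.mp hx); replace hy := Finset.mem_addAntidiagonal.mp (Finset.mem_coe.mp hy)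
      ext
      · exact hxy
      · omega
  · intro a ha
    have h1 : u.coeff a ≠ 0 := by
      intro h; apply ha; simp [h]
    have h2 : v.coeff (c - a) ≠ 0 := by
      intro h; apply ha; simp [h]
    simp only [Finset.coe_image, Set.mem_image, Finset.mem_coe]
    exact ⟨(a, c - a), Finset.mem_addAntidiagonal.mpr ⟨h1, h2, by omega⟩, rfl⟩

lemma fd_mul (u v : K) : fd (u * v) = fd u * v + u * fd v := by
  ext k
  have e1 : (fd u * v).coeff k = ∑ᶠ a : ℤ, ((a:ℂ)) * u.coeff a * v.coeff (k + 1 - a) := by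
    rw [mul_coeff_finsum]
    rw [← finsum_comp_equiv (Equiv.subRight (1:ℤ))]
    apply finsum_congr; intro b
    simp only [Equiv.subRight_apply, fd_coeff]
    have : b - 1 + 1 = b := by ring
    rw [this]
    ring_nf
  have e2 : (u * fd v).coeff k = ∑ᶠ a : ℤ, u.coeff a * (((k + 1 - a : ℤ):ℂ)) * v.coeff (k + 1 - a) := by
    rw [mul_coeff_finsum]
    apply finsum_congr; intro a
    rw [fd_coeff]
    have : k - a + 1 = k + 1 - a := by ring
    rw [this]
    ring
  have hf1 : (Function.support fun a : ℤ => ((a:ℂ)) * u.coeff a * v.coeff (k + 1 - a)).Finite := by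
    apply (finite_inter u v (k+1)).subset
    intro a ha
    simp only [Function.mem_support] at ha
    constructor <;> intro h <;> simp [h] at ha
  have hf2 : (Function.support fun a : ℤ => u.coeff a * (((k + 1 - a : ℤ):ℂ)) * v.coeff (k + 1 - a)).Finite := by
    apply (finite_inter u v (k+1)).subset
    intro a ha
    simp only [Function.mem_support] at ha
    constructor <;> intro h <;> simp [h] at ha
  rw [HahnSeries.coeff_add, e1, e2, ← finsum_add_distrib hf1 hf2, fd_coeff, mul_coeff_finsum]
  rw [mul_finsum' _ _ (by
    apply (finite_inter u v (k+1)).subset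
    intro a ha
    simp only [Function.mem_support] at ha
    constructor <;> intro h <;> simp [h] at ha)]
  apply finsum_congr; intro a
  push_cast
  ring

lemma Res_fd (f : K) : Res (fd f) = 0 := by
  simp [Res, fd_coeff]

lemma Res_ibp (u v : K) : Res (fd u * v) = - Res (u * fd v) := by
  have h := Res_fd (u * v)
  rw [fd_mul] at h
  have h2 : Res (fd u * v) + Res (u * fd v) = 0 := by
    rw [← h]; simp [Res, HahnSeries.coeff_add]
  linear_combination h2

lemma tneg_coeff (f : K) (k : ℤ) : (tneg f).coeff k = if k < 0 then f.coeff k else 0 := rfl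

lemma tpos_coeff (f : K) (k : ℤ) : (tpos f).coeff k = if 0 ≤ k then f.coeff k else 0 := rfl

lemma mul_single_one_coeff (g : K) (m c : ℤ) :
    (g * HahnSeries.single m (1:ℂ)).coeff c = g.coeff (c - m) := by
  have := HahnSeries.coeff_mul_single_add (r := (1:ℂ)) (x := g) (a := c - m) (b := m)
  rw [sub_add_cancel] at this
  rw [this, mul_one]

/-- The function `Q g h m` = diagonal coefficient at `z^m` of `(g·)^{+-} (h·)^{-+}`. -/

def Q (g h : K) : ℤ → ℂ := fun m =>
  if m < 0 then ∑ᶠ t : ℤ, (if 0 ≤ t then g.coeff (m - t) * h.coeff (t - m) else 0) else 0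

lemma cterm_eq (g h : K) (m : ℤ) (hm : m < 0) :
    (tneg (g * tpos (h * HahnSeries.single m 1))).coeff m
      = ∑ᶠ t : ℤ, (if 0 ≤ t then g.coeff (m - t) * h.coeff (t - m) else 0) := by
  rw [tneg_coeff, if_pos hm, mul_coeff_finsum]
  rw [← finsum_comp_equiv (Equiv.subLeft m)]
  apply finsum_congr; intro t
  simp only [Equiv.subLeft_apply]
  have h1 : m - (m - t) = t := by ring
  rw [h1, tpos_coeff, mul_single_one_coeff]
  have h2 : t - m = t - m := rfl
  by_cases ht : 0 ≤ t
  · rw [if_pos ht, if_pos ht]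
  · rw [if_neg ht, if_neg ht, mul_zero]

lemma Q_eq_cterm (g h : K) (m : ℤ) :
    Q g h m = (if m < 0 then (tneg (g * tpos (h * HahnSeries.single m 1))).coeff m else 0) := by
  by_cases hm : m < 0
  · rw [Q, if_pos hm, if_pos hm, cterm_eq g h m hm]
  · rw [Q, if_neg hm, if_neg hm]

lemma Q_support {g h : K} {N : ℕ} (hh : ∀ k : ℤ, (N:ℤ) ≤ |k| → h.coeff k = 0) :
    Function.support (Q g h) ⊆ Set.Icc (-(N:ℤ)) 0 := by
  intro m hm
  simp only [Function.mem_support] at hm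
  by_contra hmem
  apply hm
  rw [Set.mem_Icc] at hmem
  push_neg at hmem
  rw [Q]
  by_cases hm0 : m < 0
  · rw [if_pos hm0]
    apply finsum_eq_zero_of_forall_eq_zero
    intro t
    by_cases ht : 0 ≤ t
    · rw [if_pos ht]
      have hm2 : m < -(N:ℤ) := by
        by_contra h'
        exact absurd (hmem (by omega)) (by omega)
      have : h.coeff (t - m) = 0 := by
        apply hh; rw [abs_of_nonneg (by omega)]; omega
      rw [this, mul_zero]
    · rw [if_neg ht]
  · rw [if_neg hm0]

/-- The `F` function on pairs. -/

def Fp (g h : K) : ℤ × ℤ → ℂ := fun p =>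
  if p.1 < 0 ∧ 0 ≤ p.2 then g.coeff (p.1 - p.2) * h.coeff (p.2 - p.1) else 0

lemma Fp_support {g h : K} {N : ℕ} (hh : ∀ k : ℤ, (N:ℤ) ≤ |k| → h.coeff k = 0) :
    Function.support (Fp g h) ⊆ Set.Icc (-(N:ℤ)) 0 ×ˢ Set.Icc 0 (N:ℤ) := by
  rintro ⟨m, t⟩ hp
  simp only [Function.mem_support, Fp] at hp
  by_cases hc : m < 0 ∧ 0 ≤ t
  · rw [if_pos hc] at hp
    have hh' : h.coeff (t - m) ≠ 0 := fun h0 => hp (by rw [h0, mul_zero])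
    have habs : |t - m| < (N:ℤ) := by
      by_contra hab; exact hh' (hh _ (by omega))
    rw [abs_of_nonneg (by omega)] at habs
    constructor <;> simp only [Set.mem_Icc] <;> omega
  · rw [if_neg hc] at hp; exact absurd rfl hp

/-- The swap-shear equivalence `(s, m) ↦ (m, s + m)`. -/

def shear : ℤ × ℤ ≃ ℤ × ℤ where
  toFun p := (p.2, p.1 + p.2)
  invFun q := (q.2 - q.1, q.1)
  left_inv p := by ext <;> simp
  right_inv q := by ext <;> simp

lemma Q_sum {g h : K} {N : ℕ} (hh : ∀ k : ℤ, (N:ℤ) ≤ |k| → h.coeff k = 0) :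
    ∑ᶠ m : ℤ, Q g h m = ∑ᶠ s : ℤ, ((max s 0 : ℤ) : ℂ) * (g.coeff (-s) * h.coeff s) := by
  classical
  have hFfin : (Function.support (Fp g h)).Finite :=
    Set.Finite.subset ((Set.finite_Icc _ _).prod (Set.finite_Icc _ _)) (Fp_support hh)
  have step1 : ∑ᶠ m : ℤ, Q g h m = ∑ᶠ p : ℤ × ℤ, Fp g h p := by
    rw [finsum_curry _ hFfin]
    apply finsum_congr; intro m
    rw [Q]
    by_cases hm : m < 0
    · rw [if_pos hm]
      apply finsum_congr; intro t
      simp only [Fp]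
      by_cases ht : 0 ≤ t
      · rw [if_pos ht, if_pos ⟨hm, ht⟩]
      · rw [if_neg ht, if_neg (by tauto)]
    · rw [if_neg hm]
      symm
      apply finsum_eq_zero_of_forall_eq_zero
      intro t
      simp only [Fp]
      rw [if_neg (by tauto)]
  have hGfin : (Function.support fun q : ℤ × ℤ => Fp g h (shear q)).Finite := by
    apply Set.Finite.subset (Set.Finite.preimage (shear.injective.injOn) hFfin)
    intro q hq
    exact hq
  have step2 : ∑ᶠ p : ℤ × ℤ, Fp g h p = ∑ᶠ q : ℤ × ℤ, Fp g h (shear q) :=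
    (finsum_comp_equiv shear).symm
  rw [step1, step2, finsum_curry _ hGfin]
  apply finsum_congr; intro s
  have inner : ∀ m : ℤ, Fp g h (shear (s, m)) =
      (if m ∈ Finset.Ico (-s) 0 then g.coeff (-s) * h.coeff s else 0) := by
    intro m
    simp only [Fp, shear, Equiv.coe_fn_mk, Finset.mem_Ico]
    by_cases hc : m < 0 ∧ 0 ≤ s + m
    · rw [if_pos (show -s ≤ m ∧ m < 0 by omega)]; refine (if_pos hc).trans ?_
      congr 1 <;> ring_nf
    · rw [if_neg (show ¬(-s ≤ m ∧ m < 0) by omega)]; exact if_neg hc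
  rw [finsum_congr inner]
  rw [finsum_eq_finset_sum_of_support_subset _ (s := Finset.Ico (-s) 0) (by
    intro m hm
    simp only [Function.mem_support] at hm
    by_contra hmem
    rw [Finset.mem_coe] at hmem
    rw [if_neg hmem] at hm
    exact hm rfl)]
  rw [Finset.sum_ite_mem, Finset.inter_self, Finset.sum_const, Int.card_Ico, nsmul_eq_mul,
    show (0 : ℤ) - -s = s by ring, ← Int.toNat_eq_max]
  norm_cast

lemma coeff_prod_support {g h : K} {N : ℕ}
    (h₂ : ∀ k : ℤ, (N:ℤ) ≤ |k| → h.coeff k = 0) (c : ℤ → ℂ) :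
    (Function.support fun s : ℤ => c s * (g.coeff (-s) * h.coeff s)).Finite := by
  apply (Set.finite_Icc (-(N:ℤ)) (N:ℤ)).subset
  intro s hs
  simp only [Function.mem_support] at hs
  have : h.coeff s ≠ 0 := fun h0 => hs (by rw [h0, mul_zero, mul_zero])
  have : |s| < (N:ℤ) := by
    by_contra hab; exact this (h₂ _ (by omega))
  rw [Set.mem_Icc]
  rw [abs_lt] at this
  omega

lemma SC_eq (g₁ g₂ : K) (N : ℕ)
    (h₁ : ∀ k : ℤ, (N:ℤ) ≤ |k| → g₁.coeff k = 0)
    (h₂ : ∀ k : ℤ, (N:ℤ) ≤ |k| → g₂.coeff k = 0) :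
    ∑ᶠ m : ℤ, (Q g₁ g₂ m - Q g₂ g₁ m) = Res (g₁ * fd g₂) := by
  have fin1 : (Function.support (Q g₁ g₂)).Finite :=
    ((Set.finite_Icc _ _).subset (Q_support h₂))
  have fin2 : (Function.support (Q g₂ g₁)).Finite :=
    ((Set.finite_Icc _ _).subset (Q_support h₁))
  rw [finsum_sub_distrib fin1 fin2, Q_sum h₂, Q_sum h₁]
  have reindex : ∑ᶠ s : ℤ, ((max s 0 : ℤ) : ℂ) * (g₂.coeff (-s) * g₁.coeff s)
      = ∑ᶠ s : ℤ, ((max (-s) 0 : ℤ) : ℂ) * (g₁.coeff (-s) * g₂.coeff s) := by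
    rw [← finsum_comp_equiv (Equiv.neg ℤ)
      (f := fun s : ℤ => ((max s 0 : ℤ) : ℂ) * (g₂.coeff (-s) * g₁.coeff s))]
    apply finsum_congr; intro s
    simp only [Equiv.neg_apply, neg_neg]
    ring
  rw [reindex, ← finsum_sub_distrib (coeff_prod_support h₂ _) (coeff_prod_support h₂ _)]
  have lhs_eq : ∀ s : ℤ, ((max s 0 : ℤ) : ℂ) * (g₁.coeff (-s) * g₂.coeff s)
      - ((max (-s) 0 : ℤ) : ℂ) * (g₁.coeff (-s) * g₂.coeff s)
      = (s : ℂ) * (g₁.coeff (-s) * g₂.coeff s) := by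
    intro s
    have : ((max s 0 : ℤ) : ℂ) - ((max (-s) 0 : ℤ) : ℂ) = (s : ℂ) := by
      have h0 : (max s 0 : ℤ) - (max (-s) 0 : ℤ) = s := by omega
      rw [← Int.cast_sub, h0]
    rw [← this]
    ring
  rw [finsum_congr lhs_eq]
  rw [Res, mul_coeff_finsum]
  rw [← finsum_comp_equiv (Equiv.neg ℤ)
    (f := fun a : ℤ => g₁.coeff a * (fd g₂).coeff (-1 - a))]
  apply finsum_congr; intro s
  simp only [Equiv.neg_apply, fd_coeff]
  have e1 : -1 - -s + 1 = s := by ring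
  rw [e1]
  push_cast
  ring

lemma Res_sub (x y : K) : Res (x - y) = Res x - Res y := by
  simp [Res, HahnSeries.coeff_sub]

lemma vir1_eq {n : ℕ} (D₁ D₂ : Matrix (Fin n) (Fin n) Rl × Rl) :
    vir1 D₁ D₂ = (1/6 : ℂ) * Res (fd (toK D₁.2) * fd (fd (toK D₂.2))) := by
  set H := toK D₁.2
  set Kk := toK D₂.2
  have e1 : Res (fd (fd (fd H)) * Kk) = Res (fd H * fd (fd Kk)) := by
    rw [Res_ibp (fd (fd H)) Kk, Res_ibp (fd H) (fd Kk)]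
    ring
  have e2 : Res (fd (fd (fd Kk)) * H) = - Res (fd H * fd (fd Kk)) := by
    rw [Res_ibp (fd (fd Kk)) H]
    have h3 : Res (fd (fd Kk) * fd H) = Res (fd H * fd (fd Kk)) := by
      rw [Res_ibp (fd Kk) (fd H), mul_comm (fd Kk) (fd (fd H)), Res_ibp (fd H) (fd Kk)]
      ring
    rw [h3]
  rw [vir1, Res_sub, e1, e2]
  ring

/-! ### Boundedness of Laurent polynomial symbols -/

lemma exists_ub_toK (p : Rl) : ∃ N : ℕ, ∀ k : ℤ, (N:ℤ) ≤ k → (toK p).coeff k = 0 := by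
  obtain ⟨B, hB⟩ := p.coeff.support.finite_toSet.bddAbove
  refine ⟨(B + 1).toNat, fun k hk => ?_⟩
  by_contra h
  have hmem : k ∈ p.coeff.support := Finsupp.mem_support_iff.mpr h
  have := hB (Finset.mem_coe.mpr hmem)
  have := Int.self_le_toNat (B + 1)
  omega

lemma ub_fd {g : K} {N : ℕ} (h : ∀ k : ℤ, (N:ℤ) ≤ k → g.coeff k = 0) :
    ∀ k : ℤ, (N:ℤ) ≤ k → (fd g).coeff k = 0 := by
  intro k hk
  rw [fd_coeff, h (k+1) (by omega), mul_zero]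

lemma ub_mono {g : K} {N M : ℕ} (h : ∀ k : ℤ, (N:ℤ) ≤ k → g.coeff k = 0) (hNM : N ≤ M) :
    ∀ k : ℤ, (M:ℤ) ≤ k → g.coeff k = 0 := fun k hk => h k (by omega)

lemma exists_abs_bound (g : K) (hub : ∃ N : ℕ, ∀ k : ℤ, (N:ℤ) ≤ k → g.coeff k = 0) :
    ∃ N : ℕ, ∀ k : ℤ, (N:ℤ) ≤ |k| → g.coeff k = 0 := by
  obtain ⟨N₀, hN₀⟩ := hub
  refine ⟨N₀ ⊔ ((-g.order).toNat + 1), fun k hk => ?_⟩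
  rcases le_abs.mp hk with h | h
  · exact hN₀ k (by simp at h ⊢; omega)
  · apply HahnSeries.coeff_eq_zero_of_lt_order
    have h1 := Int.self_le_toNat (-g.order)
    simp only [Nat.cast_max] at h
    push_cast at h
    omega

lemma mul_coeff_bdd {g w : K} {N : ℕ} (hg : ∀ a : ℤ, (N:ℤ) ≤ a → g.coeff a = 0)
    {b : ℤ} (hw : ∀ k : ℤ, b ≤ k → w.coeff k = 0) :
    ∀ k : ℤ, b + N ≤ k → (g * w).coeff k = 0 := by
  intro k hk
  rw [mul_coeff_finsum]
  apply finsum_eq_zero_of_forall_eq_zero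
  intro a
  by_cases ha : (N:ℤ) ≤ a
  · rw [hg a ha, zero_mul]
  · rw [hw (k - a) (by omega), mul_zero]

lemma fd_bdd {w : K} {b : ℤ} (hw : ∀ k : ℤ, b ≤ k → w.coeff k = 0) :
    ∀ k : ℤ, b ≤ k → (fd w).coeff k = 0 := by
  intro k hk
  rw [fd_coeff, hw (k+1) (by omega), mul_zero]

/-! ### The vector space and operators -/

def Mop {n : ℕ} (D : Matrix (Fin n) (Fin n) Rl × Rl) : V n → V n :=
  fun v i => fd (toK D.2) * v i

/-! ### Linearity -/

def IsLinOp {n : ℕ} (T : V n → V n) : Prop :=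
  ∀ (c : ℂ) (v w : V n), T (v + c • w) = T v + c • T w

lemma IsLinOp.zero {n : ℕ} {T : V n → V n} (h : IsLinOp T) : T 0 = 0 := by
  have := h 1 0 0
  simp only [one_smul, add_zero] at this
  have h2 : T 0 + T 0 = T 0 + 0 := by rw [← this, add_zero]
  exact (add_left_cancel h2)

lemma IsLinOp.add {n : ℕ} {T : V n → V n} (h : IsLinOp T) (x y : V n) :
    T (x + y) = T x + T y := by
  have := h 1 x y
  simpa using this

lemma IsLinOp.smul {n : ℕ} {T : V n → V n} (h : IsLinOp T) (c : ℂ) (x : V n) :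
    T (c • x) = c • T x := by
  have := h c 0 x
  simpa [h.zero] using this

lemma fd_add_smul (c : ℂ) (x y : K) : fd (x + c • y) = fd x + c • fd y := by
  ext k
  simp only [fd_coeff, HahnSeries.coeff_add, HahnSeries.coeff_smul, smul_eq_mul]
  ring

lemma mul_smul_right (u : K) (c : ℂ) (y : K) : u * (c • y) = c • (u * y) := by
  ext k
  rw [HahnSeries.coeff_smul, mul_coeff_finsum, mul_coeff_finsum, smul_eq_mul,
    mul_finsum' _ _ (by
      apply (finite_inter u y k).subset
      intro a ha
      simp only [Function.mem_support] at ha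
      constructor <;> intro h <;> simp [h] at ha)]
  apply finsum_congr; intro a
  rw [HahnSeries.coeff_smul, smul_eq_mul]
  ring

lemma mul_add_smul (u : K) (c : ℂ) (x y : K) : u * (x + c • y) = u * x + c • (u * y) := by
  rw [mul_add, mul_smul_right]

lemma isLinOp_projM {n : ℕ} : IsLinOp (projM (n := n)) := by
  intro c v w
  funext i
  ext k
  simp only [projM, Pi.add_apply, Pi.smul_apply, tneg_coeff, HahnSeries.coeff_add,
    HahnSeries.coeff_smul, smul_eq_mul]
  by_cases hk : k < 0 <;> simp [hk]

lemma isLinOp_projP {n : ℕ} : IsLinOp (projP (n := n)) := by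
  intro c v w
  funext i
  ext k
  simp only [projP, Pi.add_apply, Pi.smul_apply, tpos_coeff, HahnSeries.coeff_add,
    HahnSeries.coeff_smul, smul_eq_mul]
  by_cases hk : (0:ℤ) ≤ k <;> simp [hk]

lemma isLinOp_Mop {n : ℕ} (D : Matrix (Fin n) (Fin n) Rl × Rl) : IsLinOp (Mop D) := by
  intro c v w
  funext i
  simp only [Mop, Pi.add_apply, Pi.smul_apply]
  rw [mul_add_smul]

lemma isLinOp_Dop (n : ℕ) (β : ℤ) (D : Matrix (Fin n) (Fin n) Rl × Rl) :
    IsLinOp (Dop n β D) := by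
  intro c v w
  funext i
  simp only [Dop, Pi.add_apply, Pi.smul_apply]
  have hsum : (∑ j, toK (D.1 i j) * (v j + c • w j))
      = (∑ j, toK (D.1 i j) * v j) + c • (∑ j, toK (D.1 i j) * w j) := by
    rw [Finset.smul_sum, ← Finset.sum_add_distrib]
    apply Finset.sum_congr rfl
    intro j _
    rw [mul_add_smul]
  rw [fd_add_smul, mul_add_smul (toK D.2) c (fd (v i)) (fd (w i)),
    mul_add_smul (fd (toK D.2)) c (v i) (w i), hsum]
  simp only [← Int.cast_smul_eq_zsmul ℂ β]
  module

/-! ### Expansion of `commPM` under linear perturbation -/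

lemma commPM_expand {n : ℕ} {S₁ S₂ M₁ M₂ : V n → V n}
    (hS₁ : IsLinOp S₁) (hS₂ : IsLinOp S₂) (hM₁ : IsLinOp M₁) (hM₂ : IsLinOp M₂)
    (c : ℂ) (v : V n) :
    commPM (fun w => S₁ w + c • M₁ w) (fun w => S₂ w + c • M₂ w) v
      = commPM S₁ S₂ v + c • (commPM S₁ M₂ v + commPM M₁ S₂ v)
        + (c * c) • commPM M₁ M₂ v := by
  have key : ∀ (T₁ T₂ U₁ U₂ : V n → V n), IsLinOp T₁ → IsLinOp T₂ → IsLinOp U₁ → IsLinOp U₂ →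
      projM ((fun w => T₁ w + c • U₁ w) (projP ((fun w => T₂ w + c • U₂ w) (projM v))))
        = projM (T₁ (projP (T₂ (projM v)))) +
            c • (projM (T₁ (projP (U₂ (projM v)))) + projM (U₁ (projP (T₂ (projM v)))))
          + (c * c) • projM (U₁ (projP (U₂ (projM v)))) := by
    intro T₁ T₂ U₁ U₂ hT₁ hT₂ hU₁ hU₂
    simp only []
    rw [isLinOp_projP c (T₂ (projM v)) (U₂ (projM v))]
    rw [hT₁ c (projP (T₂ (projM v))) (projP (U₂ (projM v)))]
    rw [hU₁ c (projP (T₂ (projM v))) (projP (U₂ (projM v)))]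
    simp only [isLinOp_projM.add, isLinOp_projM.smul]
    module
  rw [commPM, key S₁ S₂ M₁ M₂ hS₁ hS₂ hM₁ hM₂, key S₂ S₁ M₂ M₁ hS₂ hS₁ hM₂ hM₁]
  simp only [commPM]
  module

/-! ### `cLie` as a finite sum -/

def gfun (n : ℕ) (T₁ T₂ : V n → V n) : ℤ → ℂ := fun m =>
  if m < 0 then ∑ i : Fin n, ((commPM T₁ T₂ (bas n m i)) i).coeff m else 0

lemma cLie_eq (n : ℕ) (T₁ T₂ : V n → V n) : cLie n T₁ T₂ = ∑ᶠ m : ℤ, gfun n T₁ T₂ m := by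
  unfold cLie gfun
  apply finsum_congr; intro m
  rw [finsum_eq_if]
  by_cases hm : m < 0
  · rw [if_pos hm, if_pos hm, finsum_eq_sum_of_fintype]
  · rw [if_neg hm, if_neg hm]

/-! ### Degree raising bounds and vanishing -/

def VBdd {n : ℕ} (v : V n) (b : ℤ) : Prop := ∀ j k, b ≤ k → (v j).coeff k = 0

def Raises {n : ℕ} (T : V n → V n) (N : ℕ) : Prop :=
  ∀ v b, VBdd v b → VBdd (T v) (b + N)

lemma exists_raises_Dop (n : ℕ) (β : ℤ) (D : Matrix (Fin n) (Fin n) Rl × Rl) :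
    ∃ N : ℕ, Raises (Dop n β D) N := by
  choose f hf using fun ij : Fin n × Fin n => exists_ub_toK (D.1 ij.1 ij.2)
  obtain ⟨Nh, hNh⟩ := exists_ub_toK D.2
  refine ⟨(Finset.univ.sup f) ⊔ Nh, ?_⟩
  intro v b hv j k hk
  set N : ℕ := (Finset.univ.sup f) ⊔ Nh with hN
  simp only [Dop, HahnSeries.coeff_add]
  have h1 : (∑ l, toK (D.1 j l) * v l).coeff k = 0 := by
    have hc : (∑ l, toK (D.1 j l) * v l).coeff k = ∑ l, (toK (D.1 j l) * v l).coeff k :=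
      map_sum (HahnSeries.coeff.addMonoidHom k) _ Finset.univ
    rw [hc]
    apply Finset.sum_eq_zero
    intro l _
    exact mul_coeff_bdd (ub_mono (hf (j, l)) (le_sup_of_le_left (Finset.le_sup (Finset.mem_univ _))))
      (hv l) k hk
  have h2 : (toK D.2 * fd (v j)).coeff k = 0 :=
    mul_coeff_bdd (ub_mono hNh le_sup_right) (fd_bdd (hv j)) k hk
  have h3 : (fd (toK D.2) * v j).coeff k = 0 :=
    mul_coeff_bdd (ub_fd (ub_mono hNh le_sup_right)) (hv j) k hk
  rw [h1, h2, ← Int.cast_smul_eq_zsmul ℂ β, HahnSeries.coeff_smul, h3]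
  simp

lemma exists_raises_Mop {n : ℕ} (D : Matrix (Fin n) (Fin n) Rl × Rl) :
    ∃ N : ℕ, Raises (Mop D) N := by
  obtain ⟨Nh, hNh⟩ := exists_ub_toK D.2
  refine ⟨Nh, ?_⟩
  intro v b hv j k hk
  exact mul_coeff_bdd (ub_fd hNh) (hv j) k hk

lemma vbdd_bas (n : ℕ) (m : ℤ) (i : Fin n) : VBdd (bas n m i) (m + 1) := by
  intro j k hk
  simp only [bas]
  by_cases hj : j = i
  · rw [if_pos hj, HahnSeries.coeff_single, if_neg (by omega)]
  · rw [if_neg hj]; rfl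

lemma vbdd_projM {n : ℕ} {v : V n} {b : ℤ} (hv : VBdd v b) : VBdd (projM v) b := by
  intro j k hk
  simp only [projM, tneg_coeff]
  by_cases h : k < 0
  · rw [if_pos h, hv j k hk]
  · rw [if_neg h]

lemma projP_eq_zero {n : ℕ} {v : V n} {b : ℤ} (hv : VBdd v b) (hb : b ≤ 0) :
    projP v = 0 := by
  funext j
  ext k
  simp only [projP, tpos_coeff]
  by_cases h : (0:ℤ) ≤ k
  · rw [if_pos h, hv j k (by omega)]; rfl
  · rw [if_neg h]; rfl

lemma projM_zero {n : ℕ} : projM (n := n) 0 = 0 := by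
  funext j; ext k
  simp only [projM, tneg_coeff]
  by_cases h : k < 0 <;> simp [h]

lemma commPM_bas_vanish {n : ℕ} {T₁ T₂ : V n → V n}
    (h₁ : IsLinOp T₁) (h₂ : IsLinOp T₂) {N₁ N₂ : ℕ}
    (r₁ : Raises T₁ N₁) (r₂ : Raises T₂ N₂) {m : ℤ}
    (hm₁ : m + 1 + N₁ ≤ 0) (hm₂ : m + 1 + N₂ ≤ 0) (i : Fin n) :
    commPM T₁ T₂ (bas n m i) = 0 := by
  have hb : VBdd (projM (bas n m i)) (m + 1) := vbdd_projM (vbdd_bas n m i)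
  have e1 : projP (T₂ (projM (bas n m i))) = 0 :=
    projP_eq_zero (r₂ _ _ hb) (by push_cast; omega)
  have e2 : projP (T₁ (projM (bas n m i))) = 0 :=
    projP_eq_zero (r₁ _ _ hb) (by push_cast; omega)
  rw [commPM, e1, e2, h₁.zero, h₂.zero, projM_zero, sub_self]

lemma gfun_finite {n : ℕ} {T₁ T₂ : V n → V n}
    (h₁ : IsLinOp T₁) (h₂ : IsLinOp T₂) {N₁ N₂ : ℕ}
    (r₁ : Raises T₁ N₁) (r₂ : Raises T₂ N₂) :
    (Function.support (gfun n T₁ T₂)).Finite := by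
  apply (Set.finite_Icc (-(N₁:ℤ) - (N₂:ℤ) - 1) 0).subset
  intro m hm
  simp only [Function.mem_support, gfun] at hm
  rw [Set.mem_Icc]
  by_cases hm0 : m < 0
  · constructor
    · by_contra h
      push_neg at h
      apply hm
      rw [if_pos hm0]
      apply Finset.sum_eq_zero
      intro i _
      rw [commPM_bas_vanish h₁ h₂ r₁ r₂ (by omega) (by omega) i]
      simp
    · omega
  · rw [if_neg hm0] at hm; exact absurd rfl hm

/-! ### Decomposition of `gfun` and `cLie` -/

lemma gfun_decomp {n : ℕ} {S₁ S₂ M₁ M₂ : V n → V n}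
    (hS₁ : IsLinOp S₁) (hS₂ : IsLinOp S₂) (hM₁ : IsLinOp M₁) (hM₂ : IsLinOp M₂)
    (c : ℂ) (m : ℤ) :
    gfun n (fun w => S₁ w + c • M₁ w) (fun w => S₂ w + c • M₂ w) m
      = gfun n S₁ S₂ m + c * (gfun n S₁ M₂ m + gfun n M₁ S₂ m)
        + (c * c) * gfun n M₁ M₂ m := by
  unfold gfun
  by_cases hm : m < 0
  · simp only [if_pos hm]
    have e : ∀ i : Fin n,
        ((commPM (fun w => S₁ w + c • M₁ w) (fun w => S₂ w + c • M₂ w) (bas n m i)) i).coeff m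
        = ((commPM S₁ S₂ (bas n m i)) i).coeff m
          + c * (((commPM S₁ M₂ (bas n m i)) i).coeff m
              + ((commPM M₁ S₂ (bas n m i)) i).coeff m)
          + (c * c) * ((commPM M₁ M₂ (bas n m i)) i).coeff m := by
      intro i
      rw [commPM_expand hS₁ hS₂ hM₁ hM₂ c (bas n m i)]
      simp only [Pi.add_apply, Pi.smul_apply, HahnSeries.coeff_add, HahnSeries.coeff_smul,
        smul_eq_mul]
    rw [Finset.sum_congr rfl (fun i _ => e i)]
    simp only [Finset.sum_add_distrib, ← Finset.mul_sum]
  · simp only [if_neg hm]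
    ring

lemma support_add_finite {x y : ℤ → ℂ} (hx : (Function.support x).Finite)
    (hy : (Function.support y).Finite) :
    (Function.support fun m => x m + y m).Finite := by
  apply (hx.union hy).subset
  intro m hm
  simp only [Function.mem_support] at hm
  by_contra h
  simp only [Set.mem_union, Function.mem_support, not_or, not_not] at h
  rw [h.1, h.2, add_zero] at hm
  exact hm rfl

lemma support_mul_finite (c : ℂ) {x : ℤ → ℂ} (hx : (Function.support x).Finite) :
    (Function.support fun m => c * x m).Finite := by
  apply hx.subset
  intro m hm
  simp only [Function.mem_support] at hm ⊢
  intro h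
  rw [h, mul_zero] at hm
  exact hm rfl

lemma cLie_decomp {n : ℕ} {S₁ S₂ M₁ M₂ : V n → V n}
    (hS₁ : IsLinOp S₁) (hS₂ : IsLinOp S₂) (hM₁ : IsLinOp M₁) (hM₂ : IsLinOp M₂)
    {NS₁ NS₂ NM₁ NM₂ : ℕ}
    (rS₁ : Raises S₁ NS₁) (rS₂ : Raises S₂ NS₂) (rM₁ : Raises M₁ NM₁) (rM₂ : Raises M₂ NM₂)
    (c : ℂ) :
    cLie n (fun w => S₁ w + c • M₁ w) (fun w => S₂ w + c • M₂ w)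
      = cLie n S₁ S₂ + c * (cLie n S₁ M₂ + cLie n M₁ S₂) + (c * c) * cLie n M₁ M₂ := by
  have f1 := gfun_finite hS₁ hS₂ rS₁ rS₂
  have f2 := gfun_finite hS₁ hM₂ rS₁ rM₂
  have f3 := gfun_finite hM₁ hS₂ rM₁ rS₂
  have f4 := gfun_finite hM₁ hM₂ rM₁ rM₂
  rw [cLie_eq, cLie_eq, cLie_eq, cLie_eq, cLie_eq]
  rw [finsum_congr (gfun_decomp hS₁ hS₂ hM₁ hM₂ c)]
  have fin23 : (Function.support fun m => gfun n S₁ M₂ m + gfun n M₁ S₂ m).Finite :=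
    support_add_finite f2 f3
  have finc23 : (Function.support fun m => c * (gfun n S₁ M₂ m + gfun n M₁ S₂ m)).Finite :=
    support_mul_finite c fin23
  have fin12 : (Function.support fun m =>
      gfun n S₁ S₂ m + c * (gfun n S₁ M₂ m + gfun n M₁ S₂ m)).Finite :=
    support_add_finite f1 finc23
  have fincc : (Function.support fun m => (c * c) * gfun n M₁ M₂ m).Finite :=
    support_mul_finite _ f4
  rw [finsum_add_distrib fin12 fincc, finsum_add_distrib f1 finc23,
    ← mul_finsum' _ _ fin23, ← mul_finsum' _ _ f4, finsum_add_distrib f2 f3]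

/-! ### The diagonal multiplication operators -/

lemma tneg_single (m : ℤ) (hm : m < 0) :
    tneg (HahnSeries.single m (1:ℂ)) = HahnSeries.single m 1 := by
  ext k
  rw [tneg_coeff]
  by_cases hk : k < 0
  · rw [if_pos hk]
  · rw [if_neg hk, HahnSeries.coeff_single, if_neg (by omega)]

lemma gfun_Mop {n : ℕ} (D₁ D₂ : Matrix (Fin n) (Fin n) Rl × Rl) (m : ℤ) :
    gfun n (Mop D₁) (Mop D₂) m
      = (n:ℂ) * (Q (fd (toK D₁.2)) (fd (toK D₂.2)) m - Q (fd (toK D₂.2)) (fd (toK D₁.2)) m) := by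
  set g₁ := fd (toK D₁.2)
  set g₂ := fd (toK D₂.2)
  unfold gfun
  by_cases hm : m < 0
  · rw [if_pos hm]
    have hcomp : ∀ i : Fin n, ((commPM (Mop D₁) (Mop D₂) (bas n m i)) i).coeff m
        = Q g₁ g₂ m - Q g₂ g₁ m := by
      intro i
      have h1 : (commPM (Mop D₁) (Mop D₂) (bas n m i)) i
          = tneg (g₁ * tpos (g₂ * tneg (bas n m i i)))
            - tneg (g₂ * tpos (g₁ * tneg (bas n m i i))) := rfl
      have h2 : bas n m i i = HahnSeries.single m 1 := by simp [bas]
      rw [h1, h2, tneg_single m hm, HahnSeries.coeff_sub,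
        Q_eq_cterm g₁ g₂ m, Q_eq_cterm g₂ g₁ m, if_pos hm, if_pos hm]
    rw [Finset.sum_congr rfl (fun i _ => hcomp i), Finset.sum_const, Finset.card_univ,
      Fintype.card_fin, nsmul_eq_mul]
  · rw [if_neg hm, Q, Q, if_neg hm, if_neg hm]
    ring

lemma ub_abs_mono {g : K} {N M : ℕ} (h : ∀ k : ℤ, (N:ℤ) ≤ |k| → g.coeff k = 0) (hNM : N ≤ M) :
    ∀ k : ℤ, (M:ℤ) ≤ |k| → g.coeff k = 0 := by
  intro k hk
  apply h
  have : (N:ℤ) ≤ (M:ℤ) := by exact_mod_cast hNM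
  omega

lemma cLie_MM {n : ℕ} (D₁ D₂ : Matrix (Fin n) (Fin n) Rl × Rl) :
    cLie n (Mop D₁) (Mop D₂) = (n:ℂ) * (6 * vir1 D₁ D₂) := by
  obtain ⟨N₁, hub₁⟩ := exists_ub_toK D₁.2
  obtain ⟨N₂, hub₂⟩ := exists_ub_toK D₂.2
  obtain ⟨Na, hNa⟩ := exists_abs_bound (fd (toK D₁.2)) ⟨N₁, ub_fd hub₁⟩
  obtain ⟨Nb, hNb⟩ := exists_abs_bound (fd (toK D₂.2)) ⟨N₂, ub_fd hub₂⟩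
  have hNa' := ub_abs_mono hNa (le_sup_left : Na ≤ Na ⊔ Nb)
  have hNb' := ub_abs_mono hNb (le_sup_right : Nb ≤ Na ⊔ Nb)
  have finQ : (Function.support fun m =>
      Q (fd (toK D₁.2)) (fd (toK D₂.2)) m - Q (fd (toK D₂.2)) (fd (toK D₁.2)) m).Finite := by
    apply (((Set.finite_Icc _ _).subset (Q_support hNb')).union
      ((Set.finite_Icc _ _).subset (Q_support hNa'))).subset
    intro m hm
    simp only [Function.mem_support] at hm
    by_contra h
    simp only [Set.mem_union, Function.mem_support, not_or, not_not] at h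
    rw [h.1, h.2, sub_zero] at hm
    exact hm rfl
  rw [cLie_eq, finsum_congr (gfun_Mop D₁ D₂), ← mul_finsum' _ _ finQ,
    SC_eq (fd (toK D₁.2)) (fd (toK D₂.2)) (Na ⊔ Nb) hNa' hNb', vir1_eq]
  ring

/-! ### Decomposition of the twisted operators -/

lemma Dop_lambda (n : ℕ) (β : ℤ) (D : Matrix (Fin n) (Fin n) Rl × Rl) :
    Dop n β D = fun w => Dop n 0 D w + (β:ℂ) • Mop D w := by
  funext v
  funext i
  simp only [Dop, Mop, Pi.add_apply, Pi.smul_apply]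
  rw [zero_smul ℤ (fd (toK D.2) * v i), add_zero]
  congr 1
  exact (Int.cast_smul_eq_zsmul ℂ β (fd (toK D.2) * v i)).symm

end Aux

/-- The identity `c_{n,β} = β·c_{n,1} + (1−β)·c_{n,0} + 6nβ(β−1)·vir₁` among the cocycles
of the central extensions of the Lie algebra of first-order scalar differential
operators, where `c_{n,β}(D₁, D₂) = c_Lie(D₁^{(β)}, D₂^{(β)})`. -/
theorem cocycle_combination_identity (n : ℕ) (hn : 1 ≤ n) (β : ℤ)
    (D₁ D₂ : Matrix (Fin n) (Fin n) Rl × Rl) :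
    cLie n (Dop n β D₁) (Dop n β D₂) =
      (β : ℂ) * cLie n (Dop n 1 D₁) (Dop n 1 D₂)
        + (1 - (β : ℂ)) * cLie n (Dop n 0 D₁) (Dop n 0 D₂)
        + 6 * (n : ℂ) * (β : ℂ) * ((β : ℂ) - 1) * vir1 D₁ D₂ := by
  obtain ⟨NS₁, rS₁⟩ := exists_raises_Dop n 0 D₁
  obtain ⟨NS₂, rS₂⟩ := exists_raises_Dop n 0 D₂
  obtain ⟨NM₁, rM₁⟩ := exists_raises_Mop D₁
  obtain ⟨NM₂, rM₂⟩ := exists_raises_Mop D₂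
  have hS₁ := isLinOp_Dop n 0 D₁
  have hS₂ := isLinOp_Dop n 0 D₂
  have hM₁ := isLinOp_Mop D₁
  have hM₂ := isLinOp_Mop D₂
  have key : ∀ γ : ℤ, cLie n (Dop n γ D₁) (Dop n γ D₂)
      = cLie n (Dop n 0 D₁) (Dop n 0 D₂)
        + (γ:ℂ) * (cLie n (Dop n 0 D₁) (Mop D₂) + cLie n (Mop D₁) (Dop n 0 D₂))
        + ((γ:ℂ) * (γ:ℂ)) * cLie n (Mop D₁) (Mop D₂) := by
    intro γ
    rw [Dop_lambda n γ D₁, Dop_lambda n γ D₂]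
    exact cLie_decomp hS₁ hS₂ hM₁ hM₂ rS₁ rS₂ rM₁ rM₂ (γ:ℂ)
  rw [key β, key 1, cLie_MM D₁ D₂]
  push_cast
  ring

end
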